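/- arXiv:2206.00706 — 3 statements merged into one kernel-verified Lean document; each statement's English description precedes it below -/
import Mathlib

section
/- Let Z_1,...,Z_n be i.i.d. random variables bounded from above by b for some b > 0, with E[Z_i] = p for all i. Let p̂ = (1/n)·Σ_{i=1}^n Z_i and σ̂ = (1/n)·Σ_{i=1}^n Z_i². Then for any γ ∈ (0, 1/b) and any δ ∈ (0,1), the probability that p ≥ p̂ + (ψ(−γb)/(γb²))·σ̂ + ln(1/δ)/(γn) is at most δ. -/
open MeasureTheory ProbabilityTheory
open scoped ENNReal

/-- Bernoulli KL divergence `kl(p‖q)`, with value `∞` when `q ∉ (0,1)` and `p ≠ q`. -/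
noncomputable def klBer (p q : ℝ) : ℝ≥0∞ :=
  if p = q then 0
  else if q ≤ 0 ∨ 1 ≤ q then ⊤
  else ENNReal.ofReal (p * Real.log (p / q) + (1 - p) * Real.log ((1 - p) / (1 - q)))

/-- Upper inverse of the Bernoulli KL divergence: `kl⁻¹⁺(p̂,ε) = max {p ≤ 1 : kl(p̂‖p) ≤ ε}`. -/
noncomputable def klInvUp (phat : ℝ) (ε : ℝ≥0∞) : ℝ :=
  sSup {p : ℝ | p ≤ 1 ∧ klBer phat p ≤ ε}

/-- Lower inverse of the Bernoulli KL divergence: `kl⁻¹⁻(p̂,ε) = min {p ≥ 0 : kl(p̂‖p) ≤ ε}`. -/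
noncomputable def klInvDown (phat : ℝ) (ε : ℝ≥0∞) : ℝ :=
  sInf {p : ℝ | 0 ≤ p ∧ klBer phat p ≤ ε}

open Classical in
/-- Kullback-Leibler divergence between two measures. -/
noncomputable def KLdiv {α : Type*} [MeasurableSpace α] (ρ ν : Measure α) : ℝ≥0∞ :=
  if ρ ≪ ν ∧ Integrable (fun x => Real.log ((ρ.rnDeriv ν x).toReal)) ρ then
    ENNReal.ofReal (∫ x, Real.log ((ρ.rnDeriv ν x).toReal) ∂ρ)
  else ⊤

/-- Extended-real exponential `ℝ≥0∞ → ℝ≥0∞`, with `exp ⊤ = ⊤`. -/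
noncomputable def ennExp (x : ℝ≥0∞) : ℝ≥0∞ :=
  if x = ⊤ then ⊤ else ENNReal.ofReal (Real.exp x.toReal)

/-- `ψ(u) = u - ln(1+u)`. -/
noncomputable def psiUB (u : ℝ) : ℝ := u - Real.log (1 + u)

/-- Binomial tail `Bin(n,k,p) = P[Binomial(n,p) ≤ k]`. -/
noncomputable def binCDF (n : ℕ) (k : ℝ) (p : ℝ) : ℝ :=
  ∑ i ∈ Finset.range (n + 1),
    if (i : ℝ) ≤ k then (n.choose i : ℝ) * p ^ i * (1 - p) ^ (n - i) else 0

/-- Inverse binomial tail `Bin⁻¹(n,k,δ) = max {p ≤ 1 : Bin(n,k,p) ≥ δ}`. -/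
noncomputable def binInv (n : ℕ) (k : ℝ) (δ : ℝ) : ℝ :=
  sSup {p : ℝ | p ≤ 1 ∧ δ ≤ binCDF n k p}

lemma hasDerivAt_log1p {t : ℝ} (ht : -1 < t) :
    HasDerivAt (fun u : ℝ => Real.log (1 + u)) (1 / (1 + t)) t := by
  have h := (Real.hasDerivAt_log (by linarith : (1:ℝ) + t ≠ 0)).comp t
    ((hasDerivAt_id t).const_add 1)
  simpa [one_div, Function.comp_def] using h

lemma log1p_le_quad {x : ℝ} (hx : -1 < x) (hx0 : x ≤ 0) :
    Real.log (1 + x) ≤ x - x ^ 2 / 2 := by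
  set φ : ℝ → ℝ := fun t => Real.log (1 + t) - t + t ^ 2 / 2 with hφ
  have hder : ∀ t ∈ Set.Ioo x (0:ℝ), HasDerivAt φ (1 / (1 + t) - 1 + t) t := by
    intro t ht
    have h1 : -1 < t := lt_trans hx ht.1
    have h2 : HasDerivAt (fun u : ℝ => u ^ 2 / 2) t t := by
      simpa using (hasDerivAt_pow 2 t).div_const 2
    exact ((hasDerivAt_log1p h1).sub (hasDerivAt_id t)).add h2
  have hmono : MonotoneOn φ (Set.Icc x 0) := by
    apply monotoneOn_of_deriv_nonneg (convex_Icc x 0)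
    · apply ContinuousOn.add
      · apply ContinuousOn.sub
        · exact (continuousOn_const.add continuousOn_id).log
            (fun t ht => by have := ht.1; dsimp; linarith)
        · exact continuousOn_id
      · exact ((continuous_pow 2).continuousOn).div_const 2
    · intro t ht
      rw [interior_Icc] at ht
      exact (hder t ht).differentiableAt.differentiableWithinAt
    · intro t ht
      rw [interior_Icc] at ht
      rw [(hder t ht).deriv]
      have h1 : 0 < 1 + t := by have := ht.1; linarith
      have : 1 / (1 + t) - 1 + t = t ^ 2 / (1 + t) := by field_simp; ring
      rw [this]; positivity
  have := hmono (Set.mem_Icc.2 ⟨le_refl x, hx0⟩) (Set.mem_Icc.2 ⟨hx0, le_refl 0⟩) hx0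
  simp only [hφ, Real.log_one, add_zero] at this
  norm_num at this
  linarith

lemma psi_key {a u : ℝ} (ha1 : -1 < a) (ha0 : a < 0) (hu : a ≤ u) :
    a ^ 2 * psiUB u ≤ psiUB a * u ^ 2 := by
  set C := psiUB a with hC
  set F : ℝ → ℝ := fun t => a ^ 2 * (t - Real.log (1 + t)) - C * t ^ 2 with hF
  have hFder : ∀ t : ℝ, -1 < t → HasDerivAt F (t * (a ^ 2 / (1 + t) - 2 * C)) t := by
    intro t ht
    have h1 : (1:ℝ) + t ≠ 0 := by linarith
    have h2 : HasDerivAt F (a ^ 2 * (1 - 1 / (1 + t)) - C * (2 * t)) t := by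
      apply HasDerivAt.sub
      · exact (((hasDerivAt_id t).sub (hasDerivAt_log1p ht)).const_mul (a ^ 2))
      · simpa using (hasDerivAt_pow 2 t).const_mul C
    convert h2 using 1
    field_simp
    ring
  have hFcont : ∀ s t : ℝ, -1 < s → ContinuousOn F (Set.Icc s t) := by
    intro s t hs
    apply ContinuousOn.sub
    · apply continuousOn_const.mul
      apply ContinuousOn.sub continuousOn_id
      exact (continuousOn_const.add continuousOn_id).log
        (fun y hy => by have := hy.1; dsimp; linarith)
    · exact continuousOn_const.mul ((continuous_pow 2).continuousOn)
  have hFa : F a = 0 := by simp [hF, hC, psiUB]; ring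
  have hF0 : F 0 = 0 := by simp [hF]
  have hBmono : ∀ s t : ℝ, -1 < s → s ≤ t →
      a ^ 2 / (1 + t) - 2 * C ≤ a ^ 2 / (1 + s) - 2 * C := by
    intro s t hs hst
    have h1 : 0 < 1 + s := by linarith
    have h2 : 0 < 1 + t := by linarith
    have := one_div_le_one_div_of_le h1 (by linarith : 1 + s ≤ 1 + t)
    have ha2 : 0 ≤ a ^ 2 := sq_nonneg a
    have : a ^ 2 / (1 + t) ≤ a ^ 2 / (1 + s) := by
      apply div_le_div_of_nonneg_left ha2 h1 (by linarith)
    linarith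
  have key : F u ≤ 0 := by
    rcases le_total u 0 with hu0 | hu0
    · rcases le_total 0 (a ^ 2 / (1 + u) - 2 * C) with hBu | hBu
      · -- F antitone on [a, u], F u ≤ F a = 0
        have hanti : AntitoneOn F (Set.Icc a u) := by
          apply antitoneOn_of_deriv_nonpos (convex_Icc a u) (hFcont a u ha1)
          · intro t ht
            rw [interior_Icc] at ht
            exact (hFder t (lt_trans ha1 ht.1)).differentiableAt.differentiableWithinAt
          · intro t ht
            rw [interior_Icc] at ht
            rw [(hFder t (lt_trans ha1 ht.1)).deriv]
            have htu : -1 < t := lt_trans ha1 ht.1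
            have hB : 0 ≤ a ^ 2 / (1 + t) - 2 * C :=
              le_trans hBu (hBmono t u htu (le_of_lt ht.2))
            have ht0 : t ≤ 0 := by linarith [ht.2]
            exact mul_nonpos_of_nonpos_of_nonneg ht0 hB
        have := hanti (Set.mem_Icc.2 ⟨le_refl a, hu⟩) (Set.mem_Icc.2 ⟨hu, le_refl u⟩) hu
        linarith [hFa ▸ this]
      · -- F monotone on [u, 0], F u ≤ F 0 = 0
        have hmono : MonotoneOn F (Set.Icc u 0) := by
          apply monotoneOn_of_deriv_nonneg (convex_Icc u 0)
            (hFcont u 0 (lt_of_lt_of_le ha1 hu))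
          · intro t ht
            rw [interior_Icc] at ht
            exact (hFder t (lt_of_lt_of_le ha1 (le_of_lt (lt_of_le_of_lt hu ht.1)))).differentiableAt.differentiableWithinAt
          · intro t ht
            rw [interior_Icc] at ht
            have ht1 : -1 < t := lt_of_lt_of_le ha1 (le_of_lt (lt_of_le_of_lt hu ht.1))
            rw [(hFder t ht1).deriv]
            have hB : a ^ 2 / (1 + t) - 2 * C ≤ 0 :=
              le_trans (hBmono u t (lt_of_lt_of_le ha1 hu) (le_of_lt ht.1)) hBu
            nlinarith [ht.2, hB]
        have := hmono (Set.mem_Icc.2 ⟨le_refl u, hu0⟩) (Set.mem_Icc.2 ⟨hu0, le_refl 0⟩) hu0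
        linarith [hF0 ▸ this]
    · -- 0 ≤ u; use C ≥ a²/2
      have hCge : a ^ 2 / 2 ≤ C := by
        have := log1p_le_quad ha1 (le_of_lt ha0)
        simp only [hC, psiUB]
        linarith
      have hanti : AntitoneOn F (Set.Icc 0 u) := by
        apply antitoneOn_of_deriv_nonpos (convex_Icc 0 u) (hFcont 0 u (by norm_num))
        · intro t ht
          rw [interior_Icc] at ht
          exact (hFder t (by linarith [ht.1])).differentiableAt.differentiableWithinAt
        · intro t ht
          rw [interior_Icc] at ht
          rw [(hFder t (by linarith [ht.1])).deriv]
          have hB : a ^ 2 / (1 + t) - 2 * C ≤ 0 := by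
            have h1 := hBmono 0 t (by norm_num) (le_of_lt ht.1)
            simp only [add_zero, div_one] at h1
            linarith
          exact mul_nonpos_of_nonneg_of_nonpos (le_of_lt ht.1) hB
      have := hanti (Set.mem_Icc.2 ⟨le_refl 0, hu0⟩) (Set.mem_Icc.2 ⟨hu0, le_refl u⟩) hu0
      linarith [hF0 ▸ this]
  simp only [hF] at key
  simp only [psiUB]
  linarith


/-- **Unexpected Bernstein inequality.** For i.i.d. `Z_1, ..., Z_n` bounded above by `b > 0` with
mean `p`, empirical mean `p̂` and empirical second moment `σ̂`, for any `γ ∈ (0, 1/b)` and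
`δ ∈ (0,1)`, `P[p ≥ p̂ + (ψ(-γb)/(γb²)) σ̂ + ln(1/δ)/(γn)] ≤ δ`. -/
theorem unexpected_bernstein
    (n : ℕ) (hn : 0 < n) (b : ℝ) (hb : 0 < b)
    (D : Measure ℝ) [IsProbabilityMeasure D]
    (hD : ∀ᵐ z ∂D, z ≤ b) (hint : Integrable (fun z : ℝ => z) D)
    (p : ℝ) (hp : p = ∫ z, z ∂D)
    (γ : ℝ) (hγ : γ ∈ Set.Ioo 0 (1 / b))
    (δ : ℝ) (hδ : δ ∈ Set.Ioo (0 : ℝ) 1) :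
    Measure.pi (fun _ : Fin n => D)
      {ω | (1 / (n : ℝ)) * ∑ i, ω i
          + (psiUB (-(γ * b)) / (γ * b ^ 2)) * ((1 / (n : ℝ)) * ∑ i, (ω i) ^ 2)
          + Real.log (1 / δ) / (γ * n) ≤ p}
      ≤ ENNReal.ofReal δ := by
  obtain ⟨hγ0, hγ2⟩ := hγ
  obtain ⟨hδ0, hδ1⟩ := hδ
  have hγb : γ * b < 1 := (lt_div_iff₀ hb).mp hγ2
  have hn0 : (0:ℝ) < n := Nat.cast_pos.mpr hn
  set c : ℝ := psiUB (-(γ * b)) / b ^ 2 with hc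
  set G : ℝ → ℝ := fun z => Real.exp (γ * (p - z) - c * z ^ 2) with hG
  -- pointwise bound
  have expBound : ∀ z : ℝ, z ≤ b → G z ≤ Real.exp (γ * p) * (1 - γ * z) := by
    intro z hz
    have h1 : 0 < 1 - γ * z := by nlinarith
    have key := psi_key (a := -(γ * b)) (u := -(γ * z)) (by linarith) (by nlinarith)
      (by nlinarith)
    have hu : psiUB (-(γ * z)) = -(γ * z) - Real.log (1 - γ * z) := by
      rw [psiUB]; ring_nf
    rw [hu] at key
    have hb2 : c * b ^ 2 = psiUB (-(γ * b)) := by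
      rw [hc]; field_simp
    rw [← hb2] at key
    set L := Real.log (1 - γ * z) with hLz
    have h2 : -(γ * z) - c * z ^ 2 ≤ L := by
      have h7 : (-(γ * z) - L) * (γ ^ 2 * b ^ 2) ≤ (c * z ^ 2) * (γ ^ 2 * b ^ 2) := by
        nlinarith [key]
      have h8 := le_of_mul_le_mul_right h7 (by positivity : (0:ℝ) < γ ^ 2 * b ^ 2)
      linarith
    have : G z = Real.exp (γ * p) * Real.exp (-(γ * z) - c * z ^ 2) := by
      rw [hG, ← Real.exp_add]; ring_nf
    rw [this]
    apply mul_le_mul_of_nonneg_left _ (Real.exp_pos _).le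
    rw [← Real.le_log_iff_exp_le h1]
    exact h2
  have hGpos : ∀ z : ℝ, 0 < G z := fun z => Real.exp_pos _
  have hGcont : Continuous G := by fun_prop
  have hintD : Integrable (fun z : ℝ => Real.exp (γ * p) * (1 - γ * z)) D :=
    ((integrable_const (1:ℝ)).sub (hint.const_mul γ)).const_mul (Real.exp (γ * p))
  have hGint : Integrable G D := by
    apply Integrable.mono' hintD hGcont.aestronglyMeasurable
    filter_upwards [hD] with z hz
    rw [Real.norm_eq_abs, abs_of_pos (hGpos z)]
    exact expBound z hz
  have hIle : ∫ z, G z ∂D ≤ 1 := by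
    have h1 : ∫ z, G z ∂D ≤ ∫ z, Real.exp (γ * p) * (1 - γ * z) ∂D := by
      apply integral_mono_ae hGint hintD
      filter_upwards [hD] with z hz using expBound z hz
    have h2 : ∫ z, Real.exp (γ * p) * (1 - γ * z) ∂D = Real.exp (γ * p) * (1 - γ * p) := by
      rw [integral_const_mul]
      congr 1
      rw [integral_sub (integrable_const _) (hint.const_mul γ)]
      rw [integral_const, integral_const_mul, ← hp]
      simp
    have h3 : Real.exp (γ * p) * (1 - γ * p) ≤ 1 := by
      have h4 : 1 - γ * p ≤ Real.exp (-(γ * p)) := by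
        have := Real.add_one_le_exp (-(γ * p)); linarith
      calc Real.exp (γ * p) * (1 - γ * p) ≤ Real.exp (γ * p) * Real.exp (-(γ * p)) :=
            mul_le_mul_of_nonneg_left h4 (Real.exp_pos _).le
        _ = 1 := by rw [← Real.exp_add]; simp
    linarith
  have hI0 : 0 ≤ ∫ z, G z ∂D := integral_nonneg fun z => (hGpos z).le
  set P := Measure.pi (fun _ : Fin n => D) with hP
  haveI : IsProbabilityMeasure P := by rw [hP]; infer_instance
  -- product integral
  have hprodInt : Integrable (fun x : Fin n → ℝ => ∏ i, G (x i)) P := by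
    exact Integrable.fintype_prod (f := fun _ => G) (μ := fun _ => D) (fun _ => hGint)
  have hprodEq : ∫ x : Fin n → ℝ, (∏ i, G (x i)) ∂P = (∫ z, G z ∂D) ^ n := by
    have h := integral_fintype_prod_eq_pow (ι := Fin n) G (μ := D)
    simpa using h
  have hprodLe1 : ∫ x : Fin n → ℝ, (∏ i, G (x i)) ∂P ≤ 1 := by
    rw [hprodEq]
    exact pow_le_one₀ hI0 hIle
  -- Markov
  have markov := mul_meas_ge_le_integral_of_nonneg (μ := P)
    (f := fun x : Fin n → ℝ => ∏ i, G (x i))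
    (ae_of_all _ fun x => Finset.prod_nonneg fun i _ => (hGpos _).le) hprodInt (1 / δ)
  -- event inclusion
  have hsub : {ω : Fin n → ℝ | (1 / (n : ℝ)) * ∑ i, ω i
          + (psiUB (-(γ * b)) / (γ * b ^ 2)) * ((1 / (n : ℝ)) * ∑ i, (ω i) ^ 2)
          + Real.log (1 / δ) / (γ * n) ≤ p}
      ⊆ {x : Fin n → ℝ | 1 / δ ≤ ∏ i, G (x i)} := by
    intro ω hω
    simp only [Set.mem_setOf_eq] at hω ⊢
    set S1 := ∑ i, ω i with hS1
    set S2 := ∑ i, (ω i) ^ 2 with hS2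
    have hprod : ∏ i, G (ω i) = Real.exp (∑ i, (γ * (p - ω i) - c * (ω i) ^ 2)) := by
      rw [Real.exp_sum]
    have hsum : (∑ i, (γ * (p - ω i) - c * (ω i) ^ 2))
        = (n : ℝ) * (γ * p) - γ * S1 - c * S2 := by
      simp only [mul_sub, Finset.sum_sub_distrib, Finset.sum_const, Finset.card_univ,
        Fintype.card_fin, nsmul_eq_mul, ← Finset.mul_sum]
      rfl
    rw [hprod, hsum]
    rw [← Real.exp_log (by positivity : (0:ℝ) < 1 / δ)]
    apply Real.exp_le_exp.mpr
    -- from hω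
    set K := psiUB (-(γ * b)) / (γ * b ^ 2) with hK
    set L := Real.log (1 / δ) with hL
    have hγK : γ * K = c := by
      rw [hK, hc]; field_simp
    have hmul := mul_le_mul_of_nonneg_left hω (le_of_lt (mul_pos hγ0 hn0))
    have e1 : γ * (n:ℝ) * ((1 / (n:ℝ)) * S1) = γ * S1 := by field_simp
    have e2 : γ * (n:ℝ) * (K * ((1 / (n:ℝ)) * S2)) = c * S2 := by
      rw [← hγK]; field_simp
    have e3 : γ * (n:ℝ) * (L / (γ * (n:ℝ))) = L := by
      field_simp
    rw [mul_add, mul_add, e1, e2, e3] at hmul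
    nlinarith [hmul]
  -- conclude
  have hne : P {ω : Fin n → ℝ | (1 / (n : ℝ)) * ∑ i, ω i
          + (psiUB (-(γ * b)) / (γ * b ^ 2)) * ((1 / (n : ℝ)) * ∑ i, (ω i) ^ 2)
          + Real.log (1 / δ) / (γ * n) ≤ p} ≠ ⊤ := measure_ne_top _ _
  have hmono := measure_mono (μ := P) hsub
  have hδ' : (0:ℝ) < 1 / δ := by positivity
  have htoReal : (P {x : Fin n → ℝ | 1 / δ ≤ ∏ i, G (x i)}).toReal ≤ δ := by
    by_contra h
    push_neg at h
    have h2 : 1 < (1 / δ) * (P {x : Fin n → ℝ | 1 / δ ≤ ∏ i, G (x i)}).toReal := by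
      calc (1:ℝ) = (1/δ) * δ := by field_simp
        _ < (1/δ) * (P _).toReal := by exact mul_lt_mul_of_pos_left h hδ'
    exact absurd (le_trans markov hprodLe1) (not_le.mpr h2)
  calc P _ ≤ P {x : Fin n → ℝ | 1 / δ ≤ ∏ i, G (x i)} := hmono
    _ = ENNReal.ofReal (P {x : Fin n → ℝ | 1 / δ ≤ ∏ i, G (x i)}).toReal :=
        (ENNReal.ofReal_toReal (measure_ne_top _ _)).symm
    _ ≤ ENNReal.ofReal δ := ENNReal.ofReal_le_ofReal htoReal
end

section
/- Let Z_1,...,Z_n be i.i.d. random variables bounded from above by b > 0, and assume Σ_{i=1}^n Z_i² is finite almost surely. Then for any γ ∈ (0, 1/b): E[exp(γ·Σ_{i=1}^n (E[Z_i] − Z_i) − (ψ(−bγ)/b²)·Σ_{i=1}^n Z_i²)] ≤ 1. -/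
open MeasureTheory ProbabilityTheory
open scoped ENNReal

lemma psi_series {v : ℝ} (h0 : 0 < v) (h1 : v < 1) :
    HasSum (fun n : ℕ => v ^ (n + 2) / (n + 2)) (psiUB (-v)) := by
  have h := Real.hasSum_pow_div_log_of_abs_lt_one (x := v) (by rwa [abs_of_pos h0])
  have h2 := (hasSum_nat_add_iff' (f := fun n : ℕ => v ^ (n + 1) / ((n : ℕ) + 1)) 1).2 h
  have he : psiUB (-v) = -Real.log (1 - v) - ∑ i ∈ Finset.range 1, v ^ (i + 1) / ((i : ℕ) + 1) := by
    unfold psiUB; rw [show (1 : ℝ) + -v = 1 - v by ring]; simp; ring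
  rw [he]
  convert h2 using 2 with n
  · rfl
  push_cast; ring_nf

lemma psi_half {v : ℝ} (h0 : 0 ≤ v) (h1 : v < 1) : v ^ 2 / 2 ≤ psiUB (-v) := by
  rcases eq_or_lt_of_le h0 with h | h
  · simp [psiUB, ← h]
  · have hs := psi_series h h1
    have := le_hasSum hs 0 (fun i _ => by positivity)
    simpa using this

lemma log_lb {u : ℝ} (h0 : 0 ≤ u) (h1 : u < 1) : u + u ^ 2 / 2 ≤ -Real.log (1 - u) := by
  have h := Real.hasSum_pow_div_log_of_abs_lt_one (x := u) (by rwa [abs_of_nonneg h0])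
  have := sum_le_hasSum (Finset.range 2) (fun i _ => by positivity) h
  simp [Finset.sum_range_succ] at this
  convert this using 1
  · rfl
  norm_num

lemma psi_le_half {a : ℝ} (h0 : 0 ≤ a) : psiUB a ≤ a ^ 2 / 2 := by
  have ha : (0:ℝ) < 1 + a := by linarith
  set u := a / (1 + a) with hu
  have hu0 : 0 ≤ u := by positivity
  have hu1 : u < 1 := by rw [hu, div_lt_one ha]; linarith
  have hlog : -Real.log (1 - u) = Real.log (1 + a) := by
    rw [hu, show 1 - a / (1 + a) = (1 + a)⁻¹ by field_simp; ring, Real.log_inv]; ring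
  have h := log_lb hu0 hu1
  rw [hlog] at h
  have key : u + u ^ 2 / 2 - (a - a ^ 2 / 2) = a ^ 4 / (2 * (1 + a) ^ 2) := by
    rw [hu]; field_simp; ring
  have hpos : 0 ≤ a ^ 4 / (2 * (1 + a) ^ 2) := by positivity
  unfold psiUB; linarith

lemma psi_ratio {c a : ℝ} (hc1 : -1 < c) (hc0 : c < 0) (hca : c ≤ a) :
    c ^ 2 * psiUB a ≤ a ^ 2 * psiUB c := by
  have hv1 : -c < 1 := by linarith
  have hv0 : 0 < -c := by linarith
  have hpsic : c ^ 2 / 2 ≤ psiUB c := by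
    have := psi_half hv0.le hv1
    simpa using this
  rcases le_or_gt 0 a with h | h
  · calc c ^ 2 * psiUB a ≤ c ^ 2 * (a ^ 2 / 2) := by
          exact mul_le_mul_of_nonneg_left (psi_le_half h) (sq_nonneg c)
      _ = a ^ 2 * (c ^ 2 / 2) := by ring
      _ ≤ a ^ 2 * psiUB c := mul_le_mul_of_nonneg_left hpsic (sq_nonneg a)
  · -- c ≤ a < 0
    set u := -a with hu
    set v := -c with hv
    have hu0 : 0 < u := by simp [hu]; linarith
    have huv : u ≤ v := by simp [hu, hv]; linarith
    have hsu := psi_series hu0 (lt_of_le_of_lt huv hv1)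
    have hsv := psi_series hv0 hv1
    have hA : HasSum (fun n : ℕ => v ^ 2 * (u ^ (n + 2) / (n + 2))) (v ^ 2 * psiUB (-u)) :=
      hsu.mul_left _
    have hB : HasSum (fun n : ℕ => u ^ 2 * (v ^ (n + 2) / (n + 2))) (u ^ 2 * psiUB (-v)) :=
      hsv.mul_left _
    have hle := hasSum_le (f := fun n : ℕ => v ^ 2 * (u ^ (n + 2) / (n + 2)))
      (g := fun n : ℕ => u ^ 2 * (v ^ (n + 2) / (n + 2))) ?_ hA hB
    · have e1 : -u = a := by simp [hu]
      have e2 : -v = c := by simp [hv]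
      rw [e1, e2] at hle
      calc c ^ 2 * psiUB a = v ^ 2 * psiUB a := by rw [hv]; ring_nf
        _ ≤ u ^ 2 * psiUB c := hle
        _ = a ^ 2 * psiUB c := by rw [hu]; ring_nf
    · intro n
      rw [mul_div_assoc', mul_div_assoc']
      gcongr ?_ / _
      have hpow : u ^ n ≤ v ^ n := pow_le_pow_left₀ hu0.le huv n
      have e1 : u ^ (n + 2) = u ^ n * u ^ 2 := by ring
      have e2 : v ^ (n + 2) = v ^ n * v ^ 2 := by ring
      rw [e1, e2]
      have h3 := mul_le_mul_of_nonneg_left hpow (mul_nonneg (sq_nonneg u) (sq_nonneg v))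
      linear_combination h3

lemma key_exp {b γ z : ℝ} (hb : 0 < b) (hγ : 0 < γ) (hγb : b * γ < 1) (hz : z ≤ b) :
    Real.exp (-(γ * z) - psiUB (-(b * γ)) / b ^ 2 * z ^ 2) ≤ 1 - γ * z := by
  set c := -(b * γ) with hc
  set a := -(γ * z) with ha
  have hc1 : -1 < c := by rw [hc]; linarith
  have hc0 : c < 0 := by rw [hc]; nlinarith
  have hca : c ≤ a := by rw [hc, ha]; nlinarith
  have h1a : (0:ℝ) < 1 + a := by linarith
  have hr := psi_ratio hc1 hc0 hca
  have hgoal : -(γ * z) - psiUB c / b ^ 2 * z ^ 2 ≤ Real.log (1 - γ * z) := by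
    have hlog : Real.log (1 - γ * z) = a - psiUB a := by
      rw [show (1 : ℝ) - γ * z = 1 + a by rw [ha]; ring]
      unfold psiUB; ring
    rw [hlog]
    -- suffices psiUB a ≤ psiUB c / b^2 * z^2
    have hza : z ^ 2 = a ^ 2 / γ ^ 2 := by rw [ha]; field_simp
    have hbc : b ^ 2 = c ^ 2 / γ ^ 2 := by rw [hc]; field_simp
    have hc2 : (0:ℝ) < c ^ 2 := by nlinarith
    have hγ2 : (γ:ℝ) ≠ 0 := ne_of_gt hγ
    have keyeq : psiUB c / b ^ 2 * z ^ 2 - psiUB a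
        = (a ^ 2 * psiUB c - c ^ 2 * psiUB a) / c ^ 2 := by
      rw [hza, hbc]; field_simp [hc0.ne]
    have hnn : (0:ℝ) ≤ (a ^ 2 * psiUB c - c ^ 2 * psiUB a) / c ^ 2 :=
      div_nonneg (by linarith) hc2.le
    linarith
  calc Real.exp (-(γ * z) - psiUB c / b ^ 2 * z ^ 2)
      ≤ Real.exp (Real.log (1 - γ * z)) := Real.exp_le_exp.2 hgoal
    _ = 1 - γ * z := Real.exp_log (by rw [show (1:ℝ) - γ*z = 1 + a by rw [ha]; ring]; exact h1a)

lemma single_le_one {b γ : ℝ} (hb : 0 < b) (hγ : 0 < γ) (hγb : b * γ < 1)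
    (D : Measure ℝ) [IsProbabilityMeasure D]
    (hD : ∀ᵐ z ∂D, z ≤ b) (hint : Integrable (fun z : ℝ => z) D) :
    ∫⁻ z, ENNReal.ofReal (Real.exp (γ * ((∫ x, x ∂D) - z)
      - psiUB (-(b * γ)) / b ^ 2 * z ^ 2)) ∂D ≤ 1 := by
  set μ := ∫ x, x ∂D with hμ
  set C := psiUB (-(b * γ)) / b ^ 2 with hC
  have step1 : ∫⁻ z, ENNReal.ofReal (Real.exp (γ * (μ - z) - C * z ^ 2)) ∂D
      ≤ ∫⁻ z, ENNReal.ofReal (Real.exp (γ * μ) * (1 - γ * z)) ∂D := by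
    apply lintegral_mono_ae
    filter_upwards [hD] with z hz
    apply ENNReal.ofReal_le_ofReal
    have h1 : Real.exp (γ * (μ - z) - C * z ^ 2)
        = Real.exp (γ * μ) * Real.exp (-(γ * z) - C * z ^ 2) := by
      rw [← Real.exp_add]; ring_nf
    rw [h1]
    exact mul_le_mul_of_nonneg_left (key_exp hb hγ hγb hz) (Real.exp_nonneg _)
  have hInt : Integrable (fun z : ℝ => Real.exp (γ * μ) * (1 - γ * z)) D := by
    apply Integrable.const_mul
    exact (integrable_const (1:ℝ)).sub (hint.const_mul γ)
  have hnn : 0 ≤ᵐ[D] fun z : ℝ => Real.exp (γ * μ) * (1 - γ * z) := by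
    filter_upwards [hD] with z hz
    have : γ * z ≤ γ * b := mul_le_mul_of_nonneg_left hz hγ.le
    have h2 : γ * z < 1 := by nlinarith
    exact mul_nonneg (Real.exp_nonneg _) (by linarith)
  have step2 : ∫⁻ z, ENNReal.ofReal (Real.exp (γ * μ) * (1 - γ * z)) ∂D
      = ENNReal.ofReal (∫ z, Real.exp (γ * μ) * (1 - γ * z) ∂D) :=
    (ofReal_integral_eq_lintegral_ofReal hInt hnn).symm
  have step3 : ∫ z, Real.exp (γ * μ) * (1 - γ * z) ∂D = Real.exp (γ * μ) * (1 - γ * μ) := by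
    rw [integral_const_mul]
    congr 1
    rw [integral_sub (integrable_const _) (hint.const_mul γ), integral_const]
    simp only [probReal_univ, smul_eq_mul, one_mul, mul_one]
    rw [integral_const_mul]
  have step4 : Real.exp (γ * μ) * (1 - γ * μ) ≤ 1 := by
    have h := Real.add_one_le_exp (-(γ * μ))
    have := mul_le_mul_of_nonneg_left h (Real.exp_nonneg (γ * μ))
    rw [← Real.exp_add] at this
    simp at this
    nlinarith [this]
  calc ∫⁻ z, ENNReal.ofReal (Real.exp (γ * (μ - z) - C * z ^ 2)) ∂D
      ≤ ∫⁻ z, ENNReal.ofReal (Real.exp (γ * μ) * (1 - γ * z)) ∂D := step1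
    _ = ENNReal.ofReal (∫ z, Real.exp (γ * μ) * (1 - γ * z) ∂D) := step2
    _ ≤ ENNReal.ofReal 1 := by
        rw [step3]; exact ENNReal.ofReal_le_ofReal step4
    _ = 1 := ENNReal.ofReal_one

lemma lintegral_pi_prod (μ : Measure ℝ) [IsProbabilityMeasure μ]
    (f : ℝ → ℝ≥0∞) (hf : Measurable f) :
    ∀ n : ℕ, ∫⁻ ω : Fin n → ℝ, ∏ i, f (ω i) ∂(Measure.pi fun _ : Fin n => μ)
      = (∫⁻ x, f x ∂μ) ^ n := by
  intro n
  induction n with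
  | zero => simp
  | succ n ih =>
    have hmp := (measurePreserving_piFinSuccAbove (fun _ : Fin (n + 1) => μ) 0).symm
      (MeasurableEquiv.piFinSuccAbove (fun _ : Fin (n + 1) => ℝ) 0)
    have hFmeas : Measurable fun ω : Fin (n + 1) → ℝ => ∏ i, f (ω i) :=
      Finset.measurable_prod _ fun i _ => hf.comp (measurable_pi_apply i)
    rw [← hmp.lintegral_comp hFmeas]
    have heq : ∀ p : ℝ × (Fin n → ℝ),
        (∏ i, f (((MeasurableEquiv.piFinSuccAbove (fun _ : Fin (n + 1) => ℝ) 0).symm p) i))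
          = f p.1 * ∏ j, f (p.2 j) := by
      rintro ⟨x, y⟩
      rw [Fin.prod_univ_succ]
      simp [MeasurableEquiv.piFinSuccAbove]
    calc ∫⁻ p : ℝ × (Fin n → ℝ),
          (∏ i, f (((MeasurableEquiv.piFinSuccAbove (fun _ : Fin (n + 1) => ℝ) 0).symm p) i))
          ∂(μ.prod (Measure.pi fun _ : Fin n => μ))
        = ∫⁻ p : ℝ × (Fin n → ℝ), f p.1 * ∏ j, f (p.2 j)
          ∂(μ.prod (Measure.pi fun _ : Fin n => μ)) := by
          exact lintegral_congr heq
      _ = (∫⁻ x, f x ∂μ) * ∫⁻ y : Fin n → ℝ, ∏ j, f (y j) ∂(Measure.pi fun _ : Fin n => μ) := by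
          exact lintegral_prod_mul hf.aemeasurable
            (Finset.measurable_prod _ fun j _ => hf.comp (measurable_pi_apply j)).aemeasurable
      _ = (∫⁻ x, f x ∂μ) ^ (n + 1) := by rw [ih]; ring

/-- **Unexpected Bernstein lemma.** For i.i.d. `Z_1, ..., Z_n` bounded above by `b > 0` and any
`γ ∈ (0, 1/b)`, `E[exp(γ·Σᵢ(E[Z_i] - Z_i) - (ψ(-bγ)/b²)·Σᵢ Z_i²)] ≤ 1`. -/
theorem unexpected_bernstein_lemma
    (n : ℕ) (b : ℝ) (hb : 0 < b)
    (D : Measure ℝ) [IsProbabilityMeasure D]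
    (hD : ∀ᵐ z ∂D, z ≤ b) (hint : Integrable (fun z : ℝ => z) D)
    (γ : ℝ) (hγ : γ ∈ Set.Ioo 0 (1 / b)) :
    ∫⁻ ω : Fin n → ℝ, ENNReal.ofReal (Real.exp (γ * ∑ i, ((∫ z, z ∂D) - ω i)
          - (psiUB (-(b * γ)) / b ^ 2) * ∑ i, (ω i) ^ 2))
        ∂(Measure.pi (fun _ : Fin n => D)) ≤ 1 := by
  obtain ⟨hγ0, hγ1⟩ := hγ
  have hγb : b * γ < 1 := by
    rw [lt_div_iff₀ hb] at hγ1; linarith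
  set μ := ∫ z, z ∂D with hμ
  set C := psiUB (-(b * γ)) / b ^ 2 with hC
  set g : ℝ → ℝ≥0∞ := fun x => ENNReal.ofReal (Real.exp (γ * (μ - x) - C * x ^ 2)) with hg
  have hgmeas : Measurable g := by
    apply Measurable.ennreal_ofReal
    fun_prop
  have heq : ∀ ω : Fin n → ℝ,
      ENNReal.ofReal (Real.exp (γ * ∑ i, (μ - ω i) - C * ∑ i, (ω i) ^ 2))
        = ∏ i, g (ω i) := by
    intro ω
    have h1 : γ * ∑ i, (μ - ω i) - C * ∑ i, (ω i) ^ 2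
        = ∑ i, (γ * (μ - ω i) - C * (ω i) ^ 2) := by
      rw [Finset.mul_sum, Finset.mul_sum, ← Finset.sum_sub_distrib]
    rw [h1, Real.exp_sum]
    rw [← ENNReal.ofReal_prod_of_nonneg]
    intro i _
    exact Real.exp_nonneg _
  calc ∫⁻ ω : Fin n → ℝ, ENNReal.ofReal (Real.exp (γ * ∑ i, (μ - ω i) - C * ∑ i, (ω i) ^ 2))
        ∂(Measure.pi fun _ : Fin n => D)
      = ∫⁻ ω : Fin n → ℝ, ∏ i, g (ω i) ∂(Measure.pi fun _ : Fin n => D) :=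
        lintegral_congr heq
    _ = (∫⁻ x, g x ∂D) ^ n := lintegral_pi_prod D g hgmeas n
    _ ≤ 1 ^ n := by
        apply pow_le_pow_left' ?_ n
        exact single_le_one hb hγ0 hγb D hD hint
    _ = 1 := one_pow n
end

section
/- Fix n ∈ ℕ, δ ∈ (0,1), and real numbers L̂ > 0 and C > 0 (playing the roles of E_ρ[L̂(h,S)] and KL(ρ‖π) + ln(2√n/δ)). Then the function F(λ) = L̂/(1−λ/2) + C/(λ·(1−λ/2)·n) is convex on (0,2) and attains its minimum over (0,2) at λ* = 2/(√(2·n·L̂/C + 1) + 1). -/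
open MeasureTheory ProbabilityTheory
open scoped ENNReal

/-- **Optimal λ for the PAC-Bayes-λ bound.** For fixed `n`, `δ ∈ (0,1)`, `L̂ > 0` and `C > 0`,
the function `F(λ) = L̂/(1-λ/2) + C/(λ(1-λ/2)n)` is convex on `(0,2)` and attains its minimum
over `(0,2)` at `λ* = 2/(√(2nL̂/C + 1) + 1)`. -/
theorem pac_bayes_lambda_optimal
    (n : ℕ) (hn : 0 < n) (δ : ℝ) (hδ : δ ∈ Set.Ioo (0 : ℝ) 1)
    (Lhat C : ℝ) (hL : 0 < Lhat) (hC : 0 < C) :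
    ConvexOn ℝ (Set.Ioo (0 : ℝ) 2)
        (fun lam => Lhat / (1 - lam / 2) + C / (lam * (1 - lam / 2) * n)) ∧
      2 / (Real.sqrt (2 * n * Lhat / C + 1) + 1) ∈ Set.Ioo (0 : ℝ) 2 ∧
      IsMinOn (fun lam => Lhat / (1 - lam / 2) + C / (lam * (1 - lam / 2) * n))
        (Set.Ioo (0 : ℝ) 2) (2 / (Real.sqrt (2 * n * Lhat / C + 1) + 1)) := by
  have hnR : (0:ℝ) < n := by exact_mod_cast hn
  set s := Real.sqrt (2 * n * Lhat / C + 1) with hsdef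
  have harg : (0:ℝ) ≤ 2 * n * Lhat / C + 1 := by positivity
  have hs2 : s ^ 2 = 2 * n * Lhat / C + 1 := Real.sq_sqrt harg
  have hsnn : 0 ≤ s := Real.sqrt_nonneg _
  have hspos : 0 < s := by nlinarith [div_pos (by positivity : (0:ℝ) < 2*n*Lhat) hC]
  have hCs : C * s ^ 2 = 2 * n * Lhat + C := by
    field_simp at hs2
    nlinarith [hs2]
  have hs1 : (0:ℝ) < s + 1 := by linarith
  -- convexity
  have hinv : ConvexOn ℝ (Set.Ioi (0:ℝ)) (fun x : ℝ => x⁻¹) := by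
    simpa using convexOn_zpow (𝕜 := ℝ) (-1)
  have hsub1 : Set.Ioo (0:ℝ) 2 ⊆ Set.Ioi 0 := fun x hx => hx.1
  have c1 : ConvexOn ℝ (Set.Ioo (0:ℝ) 2) (fun x : ℝ => (C/n) * x⁻¹) := by
    have := (hinv.subset hsub1 (convex_Ioo 0 2)).smul (by positivity : (0:ℝ) ≤ C/n)
    simpa [smul_eq_mul] using this
  have c2 : ConvexOn ℝ (Set.Ioo (0:ℝ) 2) (fun x : ℝ => (2*Lhat + C/n) * (2 - x)⁻¹) := by
    have hcomp := hinv.comp_affineMap (AffineMap.lineMap (2:ℝ) (1:ℝ))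
    have hsub2 : Set.Ioo (0:ℝ) 2 ⊆ (AffineMap.lineMap (2:ℝ) (1:ℝ)) ⁻¹' Set.Ioi 0 := by
      intro x hx
      simp only [Set.mem_preimage, AffineMap.lineMap_apply, Set.mem_Ioi, vsub_eq_sub,
        vadd_eq_add, smul_eq_mul]
      nlinarith [hx.2]
    have := (hcomp.subset hsub2 (convex_Ioo 0 2)).smul
      (by positivity : (0:ℝ) ≤ 2*Lhat + C/n)
    refine this.congr fun x hx => ?_
    simp only [Function.comp, AffineMap.lineMap_apply, vsub_eq_sub, vadd_eq_add,
      smul_eq_mul]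
    rw [show x * (1 - 2) + 2 = 2 - x by ring]
  have hconv : ConvexOn ℝ (Set.Ioo (0 : ℝ) 2)
      (fun lam => Lhat / (1 - lam / 2) + C / (lam * (1 - lam / 2) * n)) := by
    refine (c1.add c2).congr fun x hx => ?_
    obtain ⟨hx0, hx2⟩ := hx
    have h1 : x ≠ 0 := ne_of_gt hx0
    have h2 : (2:ℝ) - x ≠ 0 := by linarith
    have h3 : (1:ℝ) - x/2 ≠ 0 := by intro h; apply h2; linarith
    have hn0 : (n:ℝ) ≠ 0 := ne_of_gt hnR
    rw [Pi.add_apply]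
    field_simp
    ring
  refine ⟨hconv, ⟨by positivity, ?_⟩, ?_⟩
  · rw [div_lt_iff₀ hs1]; linarith
  · rw [isMinOn_iff]
    intro lam hlam
    obtain ⟨hl0, hl2⟩ := hlam
    have hd1 : (0:ℝ) < 1 - lam / 2 := by linarith
    have hstar : (1:ℝ) - 2 / (s + 1) / 2 = s / (s + 1) := by
      field_simp; ring
    simp only [hstar]
    have hn0 : (n:ℝ) ≠ 0 := ne_of_gt hnR
    have hFl : Lhat / (s / (s + 1)) + C / (2 / (s + 1) * (s / (s + 1)) * n)
        = C * (s + 1) ^ 2 / (2 * n) := by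
      field_simp
      linear_combination (-1:ℝ) * hCs
    rw [hFl]
    have hkey : C * (s+1)^2 * (lam * (1 - lam/2)) ≤ 2 * n * Lhat * lam + 2 * C := by
      have hCslam : C * s ^ 2 * lam = (2 * n * Lhat + C) * lam := by rw [hCs]
      nlinarith [mul_nonneg hC.le (sq_nonneg ((s+1)*lam - 2)), hCslam]
    rw [div_add_div _ _ (ne_of_gt hd1) (by positivity),
      div_le_div_iff₀ (by positivity) (by positivity)]
    have h2 := mul_le_mul_of_nonneg_left hkey (mul_pos hd1 hnR).le
    ring_nf at h2 ⊢
    linarith [h2]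
end
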